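/- For every set R ⊆ V with |R| ≤ 2k − 2: if COST_2(R) < n/k − 1, then R contains at least one vertex of Y and at least one vertex of each group X_h (h = 2, …, k), some vertex of U does not belong to R, and consequently COST_{n³}(R) ≥ n³; since opt_{n³}(k) ≤ n, this gives COST_{n³}(R) ≥ n² · opt_{n³}(k). -/

import Mathlib

/-- The lower-bound vertex set: `U` has `k-1` vertices, `Y` has `n'` vertices,
and the groups `X_2, …, X_k` are `k-1` groups of `n'-1` vertices each. -/
abbrev LBV (k n' : ℕ) : Type := Fin (k - 1) ⊕ (Fin n' ⊕ (Fin (k - 1) × Fin (n' - 1)))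

/-- The distance function `d_ζ` on the lower-bound vertex set. -/
noncomputable def dLB (k n' : ℕ) (ζ : ℝ) (a b : LBV k n') : ℝ :=
  if a = b then 0
  else
    match a, b with
    | Sum.inl _, _ => ζ
    | _, Sum.inl _ => ζ
    | Sum.inr (Sum.inl _), Sum.inr (Sum.inl _) => 0
    | Sum.inr (Sum.inr p), Sum.inr (Sum.inr q) => if p.1 = q.1 then 0 else 1
    | Sum.inr (Sum.inl _), Sum.inr (Sum.inr _) => 1
    | Sum.inr (Sum.inr _), Sum.inr (Sum.inl _) => 1

/-- The `k`-median cost of a set of centers `R`: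
`COST_ζ(R) = Σ_{v ∈ V} min_{r ∈ R} d_ζ(v, r)`. -/
noncomputable def costLB (k n' : ℕ) (ζ : ℝ) (R : Finset (LBV k n')) : ℝ :=
  ∑ v : LBV k n', sInf ((fun r => dLB k n' ζ v r) '' ↑R)

section helpers
variable {k n' : ℕ} {ζ : ℝ}

lemma dLB_nonneg (hζ : 0 ≤ ζ) (a b : LBV k n') : 0 ≤ dLB k n' ζ a b := by
  unfold dLB
  split
  · exact le_rfl
  rcases a with u | (j | p) <;> rcases b with u' | (j' | q) <;> dsimp only <;>
    try exact hζ
  all_goals try norm_num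
  split <;> norm_num

lemma termLB_nonneg (hζ : 0 ≤ ζ) (R : Finset (LBV k n')) (v : LBV k n') :
    0 ≤ sInf ((fun r => dLB k n' ζ v r) '' ↑R) :=
  Real.sInf_nonneg (by rintro x ⟨r, -, rfl⟩; exact dLB_nonneg hζ v r)

lemma costLB_nonneg (hζ : 0 ≤ ζ) (R : Finset (LBV k n')) : 0 ≤ costLB k n' ζ R :=
  Finset.sum_nonneg fun v _ => termLB_nonneg hζ R v

lemma termLB_le {R : Finset (LBV k n')} {r : LBV k n'} (hr : r ∈ R) (v : LBV k n') :
    sInf ((fun r => dLB k n' ζ v r) '' ↑R) ≤ dLB k n' ζ v r :=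
  csInf_le ((R.finite_toSet.image _).bddBelow) ⟨r, hr, rfl⟩

lemma le_termLB {R : Finset (LBV k n')} (hR : R.Nonempty) {v : LBV k n'} {c : ℝ}
    (h : ∀ r ∈ R, c ≤ dLB k n' ζ v r) :
    c ≤ sInf ((fun r => dLB k n' ζ v r) '' ↑R) :=
  le_csInf (by obtain ⟨r, hr⟩ := hR; exact ⟨_, r, hr, rfl⟩)
    (by rintro x ⟨r, hr, rfl⟩; exact h r hr)

lemma costLB_eq (k n' : ℕ) (ζ : ℝ) (R : Finset (LBV k n')) : costLB k n' ζ R =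
    (∑ u : Fin (k-1), sInf ((fun r => dLB k n' ζ (Sum.inl u) r) '' ↑R)) +
    (∑ j : Fin n', sInf ((fun r => dLB k n' ζ (Sum.inr (Sum.inl j)) r) '' ↑R)) +
    (∑ p : Fin (k-1) × Fin (n'-1), sInf ((fun r => dLB k n' ζ (Sum.inr (Sum.inr p)) r) '' ↑R)) := by
  rw [costLB, Fintype.sum_sum_type, Fintype.sum_sum_type, add_assoc]


lemma dLB_self (v : LBV k n') : dLB k n' ζ v v = 0 := by simp [dLB]

lemma dLB_inl_left (u : Fin (k-1)) (b : LBV k n') (h : (Sum.inl u : LBV k n') ≠ b) :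
    dLB k n' ζ (Sum.inl u) b = ζ := by
  unfold dLB; rw [if_neg h]

lemma dLB_inl_right (a : LBV k n') (u : Fin (k-1)) (h : a ≠ Sum.inl u) :
    dLB k n' ζ a (Sum.inl u) = ζ := by
  unfold dLB; rw [if_neg h]; rcases a with _ | (_ | _) <;> rfl

lemma dLB_Y_Y (j j' : Fin n') :
    dLB k n' ζ (Sum.inr (Sum.inl j)) (Sum.inr (Sum.inl j')) = 0 := by
  unfold dLB; split <;> rfl

lemma dLB_Y_X (j : Fin n') (q : Fin (k-1) × Fin (n'-1)) :
    dLB k n' ζ (Sum.inr (Sum.inl j)) (Sum.inr (Sum.inr q)) = 1 := by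
  unfold dLB; rw [if_neg (by simp)]

lemma dLB_X_Y (p : Fin (k-1) × Fin (n'-1)) (j : Fin n') :
    dLB k n' ζ (Sum.inr (Sum.inr p)) (Sum.inr (Sum.inl j)) = 1 := by
  unfold dLB; rw [if_neg (by simp)]

lemma dLB_X_X_ne (p q : Fin (k-1) × Fin (n'-1)) (h : p.1 ≠ q.1) :
    dLB k n' ζ (Sum.inr (Sum.inr p)) (Sum.inr (Sum.inr q)) = 1 := by
  unfold dLB
  rw [if_neg (by simp only [ne_eq, Sum.inr.injEq]; exact fun e => h (by rw [e]))]
  exact if_neg h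

end helpers

/-- `opt_ζ(kk) = min { COST_ζ(R) : R ⊆ V, |R| = kk }`. -/
noncomputable def optLB (k n' : ℕ) (ζ : ℝ) (kk : ℕ) : ℝ :=
  sInf {c : ℝ | ∃ R : Finset (LBV k n'), R.card = kk ∧ c = costLB k n' ζ R}


/-- For every nonempty set `R ⊆ V` with `|R| ≤ 2k−2`: if `COST_2(R) < n/k − 1`,
then `R` contains at least one vertex of `Y` and at least one vertex of each
group `X_h` (`h = 2, …, k`), some vertex of `U` does not belong to `R`, and
consequently `COST_{n³}(R) ≥ n³`; since `opt_{n³}(k) ≤ n`, this gives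
`COST_{n³}(R) ≥ n² · opt_{n³}(k)`. -/
theorem stmt4 (n k : ℕ) (hk : 2 ≤ k) (hdvd : k ∣ n) (hnk : 3 ≤ n / k)
    (R : Finset (LBV k (n / k))) (hRne : R.Nonempty) (hRcard : R.card ≤ 2 * k - 2)
    (hcost : costLB k (n / k) 2 R < ((n / k : ℕ) : ℝ) - 1) :
    (∃ j : Fin (n / k), (Sum.inr (Sum.inl j) : LBV k (n / k)) ∈ R) ∧
    (∀ h : Fin (k - 1), ∃ j : Fin (n / k - 1),
      (Sum.inr (Sum.inr (h, j)) : LBV k (n / k)) ∈ R) ∧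
    (∃ u : Fin (k - 1), (Sum.inl u : LBV k (n / k)) ∉ R) ∧
    (n : ℝ) ^ 3 ≤ costLB k (n / k) ((n : ℝ) ^ 3) R ∧
    (n : ℝ) ^ 2 * optLB k (n / k) ((n : ℝ) ^ 3) k ≤ costLB k (n / k) ((n : ℝ) ^ 3) R := by
  have hkn : k * (n / k) = n := Nat.mul_div_cancel' hdvd
  have hone : 1 ≤ n / k := le_trans (by norm_num) hnk
  have h02 : (0:ℝ) ≤ 2 := by norm_num
  have hζ3 : (0:ℝ) ≤ (n:ℝ)^3 := by positivity
  -- Claim A : R meets Y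
  have hY : ∃ j : Fin (n / k), (Sum.inr (Sum.inl j) : LBV k (n / k)) ∈ R := by
    by_contra hno
    push_neg at hno
    have hge : ∀ j : Fin (n / k),
        (1:ℝ) ≤ sInf ((fun r => dLB k (n / k) 2 (Sum.inr (Sum.inl j)) r) '' ↑R) := by
      intro j
      refine le_termLB hRne fun r hr => ?_
      rcases r with u | (j' | q)
      · rw [dLB_inl_right _ u (by simp)]; norm_num
      · exact absurd hr (hno j')
      · rw [dLB_Y_X j q]
    have hsum : ((n / k : ℕ) : ℝ) ≤ costLB k (n / k) 2 R := by
      rw [costLB_eq]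
      have hA : (0:ℝ) ≤ ∑ u : Fin (k-1),
          sInf ((fun r => dLB k (n / k) 2 (Sum.inl u) r) '' ↑R) :=
        Finset.sum_nonneg fun u _ => termLB_nonneg h02 R (Sum.inl u)
      have hC : (0:ℝ) ≤ ∑ p : Fin (k-1) × Fin ((n / k)-1),
          sInf ((fun r => dLB k (n / k) 2 (Sum.inr (Sum.inr p)) r) '' ↑R) :=
        Finset.sum_nonneg fun p _ => termLB_nonneg h02 R (Sum.inr (Sum.inr p))
      have hB : ((n / k : ℕ):ℝ) ≤ ∑ j : Fin (n / k),
          sInf ((fun r => dLB k (n / k) 2 (Sum.inr (Sum.inl j)) r) '' ↑R) := by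
        calc ((n / k : ℕ):ℝ) = ∑ _j : Fin (n / k), (1:ℝ) := by simp
        _ ≤ _ := Finset.sum_le_sum fun j _ => hge j
      linarith
    linarith
  -- Claim B : R meets each X_h
  have hX : ∀ h : Fin (k - 1), ∃ j : Fin ((n / k) - 1),
      (Sum.inr (Sum.inr (h, j)) : LBV k (n / k)) ∈ R := by
    intro h
    by_contra hno
    push_neg at hno
    have hge : ∀ j : Fin ((n / k)-1),
        (1:ℝ) ≤ sInf ((fun r => dLB k (n / k) 2 (Sum.inr (Sum.inr (h, j))) r) '' ↑R) := by
      intro j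
      refine le_termLB hRne fun r hr => ?_
      rcases r with u | (j' | q)
      · rw [dLB_inl_right _ u (by simp)]; norm_num
      · rw [dLB_X_Y (h, j) j']
      · by_cases hq : q.1 = h
        · exact absurd hr (by rw [show q = (h, q.2) from Prod.ext hq rfl] at hr ⊢; exact hno q.2)
        · rw [dLB_X_X_ne (h, j) q (fun e => hq e.symm)]
    have hsum : (((n / k : ℕ) : ℝ) - 1) ≤ costLB k (n / k) 2 R := by
      rw [costLB_eq]
      have hA : (0:ℝ) ≤ ∑ u : Fin (k-1),
          sInf ((fun r => dLB k (n / k) 2 (Sum.inl u) r) '' ↑R) :=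
        Finset.sum_nonneg fun u _ => termLB_nonneg h02 R (Sum.inl u)
      have hB : (0:ℝ) ≤ ∑ j : Fin (n / k),
          sInf ((fun r => dLB k (n / k) 2 (Sum.inr (Sum.inl j)) r) '' ↑R) :=
        Finset.sum_nonneg fun j _ => termLB_nonneg h02 R (Sum.inr (Sum.inl j))
      have hC : (((n / k : ℕ):ℝ) - 1) ≤ ∑ p : Fin (k-1) × Fin ((n / k)-1),
          sInf ((fun r => dLB k (n / k) 2 (Sum.inr (Sum.inr p)) r) '' ↑R) := by
        rw [Fintype.sum_prod_type]
        have h1 : (((n / k : ℕ):ℝ) - 1) ≤ ∑ j : Fin ((n / k)-1),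
            sInf ((fun r => dLB k (n / k) 2 (Sum.inr (Sum.inr (h, j))) r) '' ↑R) := by
          calc (((n / k : ℕ):ℝ) - 1) = ∑ _j : Fin ((n / k)-1), (1:ℝ) := by
                simp [Nat.cast_sub hone]
          _ ≤ _ := Finset.sum_le_sum fun j _ => hge j
        refine h1.trans (Finset.single_le_sum (f := fun a : Fin (k-1) => ∑ j : Fin ((n / k)-1),
          sInf ((fun r => dLB k (n / k) 2 (Sum.inr (Sum.inr (a, j))) r) '' ↑R))
          (fun a _ => Finset.sum_nonneg fun j _ =>
            termLB_nonneg h02 R _) (Finset.mem_univ h))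
      linarith
    linarith
  -- Claim C : some u ∈ U is outside R
  obtain ⟨j₀, hj₀⟩ := hY
  choose jx hjx using hX
  have hU : ∃ u : Fin (k - 1), (Sum.inl u : LBV k (n / k)) ∉ R := by
    by_contra hno
    push_neg at hno
    have hinj1 : Function.Injective
        (fun h : Fin (k-1) => (Sum.inr (Sum.inr (h, jx h)) : LBV k (n / k))) := by
      intro a b hab
      simp only [Sum.inr.injEq, Prod.mk.injEq] at hab
      exact hab.1
    have hsub : insert (Sum.inr (Sum.inl j₀) : LBV k (n / k))
        ((Finset.univ.image fun h : Fin (k-1) => (Sum.inr (Sum.inr (h, jx h)) : LBV k (n / k))) ∪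
          Finset.univ.image (Sum.inl : Fin (k-1) → LBV k (n / k))) ⊆ R := by
      intro v hv
      simp only [Finset.mem_insert, Finset.mem_union, Finset.mem_image, Finset.mem_univ,
        true_and] at hv
      rcases hv with rfl | ⟨h, rfl⟩ | ⟨u, rfl⟩
      exacts [hj₀, hjx _, hno _]
    have hcard := Finset.card_le_card hsub
    rw [Finset.card_insert_of_notMem (by simp),
      Finset.card_union_of_disjoint (by simp [Finset.disjoint_left]),
      Finset.card_image_of_injective _ hinj1,
      Finset.card_image_of_injective _ Sum.inl_injective,
      Finset.card_univ, Fintype.card_fin] at hcard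
    omega
  -- Claim D : cost with ζ = n³ is at least n³
  obtain ⟨u, hu⟩ := hU
  have hD : (n:ℝ)^3 ≤ costLB k (n / k) ((n:ℝ)^3) R := by
    have hterm : (n:ℝ)^3 ≤ sInf ((fun r => dLB k (n / k) ((n:ℝ)^3) (Sum.inl u) r) '' ↑R) := by
      refine le_termLB hRne fun r hr => ?_
      rw [dLB_inl_left u r (fun e => hu (e ▸ hr))]
    refine hterm.trans ?_
    rw [costLB]
    exact Finset.single_le_sum (fun v _ => termLB_nonneg hζ3 R v) (Finset.mem_univ _)
  -- Claim E : opt ≤ n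
  have hmpos : 0 < n / k := hone
  have hopt : optLB k (n / k) ((n:ℝ)^3) k ≤ (n:ℝ) := by
    set y0 : LBV k (n / k) := Sum.inr (Sum.inl ⟨0, hmpos⟩) with hy0
    set R₀ : Finset (LBV k (n / k)) :=
      insert y0 (Finset.univ.image (Sum.inl : Fin (k-1) → LBV k (n / k))) with hR₀
    have hy0mem : y0 ∈ R₀ := Finset.mem_insert_self _ _
    have hcard₀ : R₀.card = k := by
      rw [hR₀, Finset.card_insert_of_notMem (by simp [hy0]),
        Finset.card_image_of_injective _ Sum.inl_injective,
        Finset.card_univ, Fintype.card_fin]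
      omega
    have hcost₀ : costLB k (n / k) ((n:ℝ)^3) R₀ ≤ (n:ℝ) := by
      rw [costLB_eq]
      have hA : ∑ u : Fin (k-1),
          sInf ((fun r => dLB k (n / k) ((n:ℝ)^3) (Sum.inl u) r) '' ↑R₀) ≤ 0 := by
        refine (Finset.sum_le_sum fun v _ => ?_).trans_eq (by simp : ∑ _u : Fin (k-1), (0:ℝ) = 0)
        exact (termLB_le (by simp [hR₀]) (Sum.inl v)).trans_eq (dLB_self _)
      have hB : ∑ j : Fin (n / k),
          sInf ((fun r => dLB k (n / k) ((n:ℝ)^3) (Sum.inr (Sum.inl j)) r) '' ↑R₀) ≤ 0 := by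
        refine (Finset.sum_le_sum fun j _ => ?_).trans_eq (by simp : ∑ _j : Fin (n / k), (0:ℝ) = 0)
        exact (termLB_le hy0mem (Sum.inr (Sum.inl j))).trans_eq (dLB_Y_Y j _)
      have hC : ∑ p : Fin (k-1) × Fin ((n / k)-1),
          sInf ((fun r => dLB k (n / k) ((n:ℝ)^3) (Sum.inr (Sum.inr p)) r) '' ↑R₀)
          ≤ ((k-1) * ((n / k)-1) : ℕ) := by
        calc ∑ p : Fin (k-1) × Fin ((n / k)-1),
            sInf ((fun r => dLB k (n / k) ((n:ℝ)^3) (Sum.inr (Sum.inr p)) r) '' ↑R₀)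
            ≤ ∑ _p : Fin (k-1) × Fin ((n / k)-1), (1:ℝ) :=
              Finset.sum_le_sum fun p _ =>
                (termLB_le hy0mem (Sum.inr (Sum.inr p))).trans_eq (dLB_X_Y p _)
          _ = _ := by simp [Finset.card_univ]
      have hfin : (((k-1) * ((n / k)-1) : ℕ) : ℝ) ≤ (n:ℝ) := by
        have : ((k-1) * ((n / k)-1) : ℕ) ≤ n := by
          calc (k-1) * ((n / k)-1) ≤ k * (n / k) := Nat.mul_le_mul (Nat.sub_le _ _) (Nat.sub_le _ _)
          _ = n := hkn
        exact_mod_cast this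
      linarith
    refine le_trans (csInf_le ⟨0, ?_⟩ ⟨R₀, hcard₀, rfl⟩) hcost₀
    rintro c ⟨R', -, rfl⟩
    exact costLB_nonneg hζ3 R'
  refine ⟨⟨j₀, hj₀⟩, fun h => ⟨jx h, hjx h⟩, ⟨u, hu⟩, hD, ?_⟩
  have h2 : (n:ℝ)^2 * optLB k (n / k) ((n:ℝ)^3) k ≤ (n:ℝ)^2 * n :=
    mul_le_mul_of_nonneg_left hopt (by positivity)
  nlinarith [hD]
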